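/- There exist homeomorphisms f, g : ℝ → ℝ fixing 0 such that 0 is globally asymptotically stable for f and for g (all forward orbits converge to 0 and for all x ≠ 0, |f(f(x))| < |x|, |g(g(x))| < |x|), but 0 is not stable for f∘g: there exists x with (f∘g)^n(x) → ∞. -/
import Mathlib

open Filter

noncomputable section ParrondoAux

def ph1 (x : ℝ) : ℝ := if x ≤ 0 then 2*x else x/3
def ph2 (x : ℝ) : ℝ := if x ≤ 0 then x/3 else 2*x

lemma ph1_mono : StrictMono ph1 := by
  intro a b hab
  unfold ph1
  split_ifs <;> [linarith; (push_neg at *; nlinarith); (push_neg at *; nlinarith); linarith]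

lemma ph2_mono : StrictMono ph2 := by
  intro a b hab
  unfold ph2
  split_ifs <;> [linarith; (push_neg at *; nlinarith); (push_neg at *; nlinarith); linarith]

lemma ph1_surj : Function.Surjective ph1 := by
  intro y
  by_cases hy : y ≤ 0
  · exact ⟨y/2, by unfold ph1; rw [if_pos (by linarith)]; ring⟩
  · exact ⟨3*y, by unfold ph1; rw [if_neg (by push_neg at hy ⊢; linarith)]; ring⟩

lemma ph2_surj : Function.Surjective ph2 := by
  intro y
  by_cases hy : y ≤ 0
  · exact ⟨3*y, by unfold ph2; rw [if_pos (by linarith)]; ring⟩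
  · exact ⟨y/2, by unfold ph2; rw [if_neg (by push_neg at hy ⊢; linarith)]; ring⟩

def pF : ℝ ≃ₜ ℝ :=
  (StrictMono.orderIsoOfSurjective ph1 ph1_mono ph1_surj).toHomeomorph.trans (Homeomorph.neg ℝ)

def pG : ℝ ≃ₜ ℝ :=
  (StrictMono.orderIsoOfSurjective ph2 ph2_mono ph2_surj).toHomeomorph.trans (Homeomorph.neg ℝ)

lemma pF_apply (x : ℝ) : pF x = -(ph1 x) := rfl
lemma pG_apply (x : ℝ) : pG x = -(ph2 x) := rfl

lemma pF_sq (x : ℝ) : pF (pF x) = 2/3 * x := by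
  rw [pF_apply, pF_apply]
  unfold ph1
  split_ifs with h1 h2 h3
  · have hx : x = 0 := le_antisymm h1 (by linarith)
    subst hx; norm_num
  · ring
  · ring
  · exfalso; push_neg at h1 h3; linarith

lemma pG_sq (x : ℝ) : pG (pG x) = 2/3 * x := by
  rw [pG_apply, pG_apply]
  unfold ph2
  split_ifs with h1 h2 h3
  · have hx : x = 0 := le_antisymm h1 (by linarith)
    subst hx; norm_num
  · ring
  · ring
  · exfalso; push_neg at h1 h3; linarith

lemma pF_bound (x : ℝ) : |pF x| ≤ 2 * |x| := by
  rw [pF_apply, abs_neg]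
  unfold ph1
  rcases le_or_gt x 0 with h | h
  · rw [if_pos h, abs_of_nonpos (by linarith), abs_of_nonpos h] <;> linarith
  · rw [if_neg (by linarith), abs_of_nonneg (by linarith), abs_of_pos h] <;> linarith

lemma pG_bound (x : ℝ) : |pG x| ≤ 2 * |x| := by
  rw [pG_apply, abs_neg]
  unfold ph2
  rcases le_or_gt x 0 with h | h
  · rw [if_pos h, abs_of_nonpos (by linarith), abs_of_nonpos h] <;> linarith
  · rw [if_neg (by linarith), abs_of_nonneg (by linarith), abs_of_pos h] <;> linarith

lemma iter_tendsto (φ : ℝ → ℝ) (hsq : ∀ x, φ (φ x) = 2/3 * x)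
    (hb : ∀ x, |φ x| ≤ 2 * |x|) (x : ℝ) :
    Tendsto (fun n => φ^[n] x) atTop (nhds 0) := by
  have heven : ∀ (k : ℕ) (y : ℝ), φ^[2*k] y = (2/3)^k * y := by
    intro k
    induction k with
    | zero => simp
    | succ k ih =>
      intro y
      rw [show 2*(k+1) = 2*k + 2 by ring, Function.iterate_add_apply]
      have : φ^[2] y = 2/3 * y := by
        simp [Function.iterate_succ_apply', hsq]
      rw [this, ih]
      ring
  have hbound : ∀ n : ℕ, |φ^[n] x| ≤ 2 * ((2/3)^(n/2) * |x|) := by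
    intro n
    rcases Nat.even_or_odd n with ⟨k, hk⟩ | ⟨k, hk⟩
    · have hn2 : n / 2 = k := by omega
      rw [hn2, show n = 2*k by omega, heven, abs_mul, abs_pow]
      rw [show |(2:ℝ)/3| = 2/3 by rw [abs_of_pos (by norm_num)]]
      nlinarith [abs_nonneg x, pow_nonneg (by norm_num : (0:ℝ) ≤ 2/3) k]
    · have hn2 : n / 2 = k := by omega
      rw [hn2, show n = 2*k + 1 by omega]
      rw [Function.iterate_succ_apply, heven, abs_mul, abs_pow,
        show |(2:ℝ)/3| = 2/3 by rw [abs_of_pos (by norm_num)]]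
      nlinarith [hb x, pow_nonneg (by norm_num : (0:ℝ) ≤ 2/3) k, abs_nonneg (φ x)]
  have hgeo : Tendsto (fun n : ℕ => 2 * (((2:ℝ)/3)^(n/2) * |x|)) atTop (nhds 0) := by
    have h1 : Tendsto (fun n : ℕ => n / 2) atTop atTop := by
      apply tendsto_atTop_atTop.2
      intro N
      exact ⟨2*N, fun n hn => by omega⟩
    have h2 : Tendsto (fun k : ℕ => ((2:ℝ)/3)^k) atTop (nhds 0) :=
      tendsto_pow_atTop_nhds_zero_of_lt_one (by norm_num) (by norm_num)
    have := ((h2.comp h1).mul_const |x|).const_mul 2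
    simpa using this
  rw [tendsto_zero_iff_abs_tendsto_zero]
  exact squeeze_zero (fun n => abs_nonneg _) hbound hgeo

end ParrondoAux

theorem parrondo_homeomorphisms_line :
    ∃ (f g : ℝ ≃ₜ ℝ), f 0 = 0 ∧ g 0 = 0 ∧
      (∀ x : ℝ, x ≠ 0 → |f (f x)| < |x| ∧ |g (g x)| < |x|) ∧
      (∀ x : ℝ, Tendsto (fun n => (⇑f)^[n] x) atTop (nhds 0) ∧
        Tendsto (fun n => (⇑g)^[n] x) atTop (nhds 0)) ∧
      (∃ x : ℝ, Tendsto (fun n => (⇑f ∘ ⇑g)^[n] x) atTop atTop) := by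
  refine ⟨pF, pG, ?_, ?_, ?_, ?_, ?_⟩
  · rw [pF_apply]; unfold ph1; norm_num
  · rw [pG_apply]; unfold ph2; norm_num
  · intro x hx
    rw [pF_sq, pG_sq, abs_mul, show |(2:ℝ)/3| = 2/3 by rw [abs_of_pos (by norm_num)]]
    have : 0 < |x| := abs_pos.2 hx
    constructor <;> nlinarith
  · intro x
    exact ⟨iter_tendsto pF pF_sq pF_bound x, iter_tendsto pG pG_sq pG_bound x⟩
  · refine ⟨1, ?_⟩
    have key : ∀ n : ℕ, (⇑pF ∘ ⇑pG)^[n] 1 = 4^n := by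
      intro n
      induction n with
      | zero => simp
      | succ n ih =>
        rw [Function.iterate_succ_apply', ih]
        have h4 : (0:ℝ) < 4^n := by positivity
        show pF (pG (4^n)) = _
        rw [pG_apply, pF_apply]
        unfold ph2 ph1
        rw [if_neg (show ¬ (4:ℝ)^n ≤ 0 by linarith)]
        rw [if_pos (show -(2*(4:ℝ)^n) ≤ 0 by linarith)]
        rw [pow_succ]; ring
    have : Tendsto (fun n : ℕ => (4:ℝ)^n) atTop atTop :=
      tendsto_pow_atTop_atTop_of_one_lt (by norm_num)
    exact this.congr (fun n => (key n).symm)
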